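/- For a prime p, α > 0, integer r, and ε > 0 with ε ≥ p^{-r-1}: ∫_{|z|_p > ε} |z|_p^{-1}·(max(|p z^{-1}|_p, p^r)^α - p^{rα}) dz = 0. Consequently, for each compact B and each ε ≥ p^{-r-1}, lim_{t→0⁺} sup_{x∈B} P(t, x, ℚ_p ∖ B_ε(x)) = 0, where P(t,x,A) = ∫_A Z_r(x-y,t) dy. -/

import Mathlib

open MeasureTheory Filter Topology

noncomputable section

variable (p : ℕ) [Fact p.Prime]

instance : MeasurableSpace ℚ_[p] := borel _
instance : BorelSpace ℚ_[p] := ⟨rfl⟩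

/-- The closed unit ball of `ℚ_[p]` (i.e. `ℤ_p`) as a positive compact set. -/
def padicUnitBall : TopologicalSpace.PositiveCompacts ℚ_[p] where
  carrier := Metric.closedBall 0 1
  isCompact' := isCompact_closedBall 0 1
  interior_nonempty' := ⟨0, mem_interior_iff_mem_nhds.2 (Metric.closedBall_mem_nhds 0 one_pos)⟩

/-- Haar measure on `ℚ_[p]` normalized so that `ℤ_p` has measure 1. -/
def μp : Measure ℚ_[p] := Measure.addHaarMeasure (padicUnitBall p)

/-- The heat kernel `Z_r(x,t) = ∫ χ(-xξ) e^{-t(⟨ξ⟩^α - p^{rα})} dξ`, where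
`⟨ξ⟩ = max(|ξ|_p, p^r)`. -/
def heatKernel (χ : AddChar ℚ_[p] ℂ) (r : ℤ) (α t : ℝ) (x : ℚ_[p]) : ℂ :=
  ∫ ξ, χ (-(x*ξ)) *
    Complex.exp (-((t * ((max ‖ξ‖ ((p:ℝ)^r)) ^ α - (p:ℝ) ^ ((r:ℝ)*α)) : ℝ) : ℂ)) ∂(μp p)

/-- The kernel `K_α(y)`, supported on the ball `|y|_p ≤ p^{-r}`. -/
def Kfun (r : ℤ) (α : ℝ) (y : ℚ_[p]) : ℝ :=
  if ‖y‖ ≤ (p:ℝ)^(-r) then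
    (1 - (p:ℝ)^α)/(1 - (p:ℝ)^(-α-1)) * ‖y‖ ^ (-α-1)
      + (p:ℝ)^((r:ℝ)*(α+1)) * (1 - (p:ℝ)^α)/(1 - (p:ℝ)^(α+1))
  else 0

/-- `u(x,t) = ∫_{|ξ|_p ≤ 1} χ(-xξ) e^{-t(⟨ξ⟩^α - p^{rα})} dξ`, the solution with initial
datum the indicator of the unit ball. -/
def uball (χ : AddChar ℚ_[p] ℂ) (r : ℤ) (α t : ℝ) (x : ℚ_[p]) : ℂ :=
  ∫ ξ in {ξ : ℚ_[p] | ‖ξ‖ ≤ 1}, χ (-(x*ξ)) *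
    Complex.exp (-((t * ((max ‖ξ‖ ((p:ℝ)^r)) ^ α - (p:ℝ) ^ ((r:ℝ)*α)) : ℝ) : ℂ)) ∂(μp p)

/-- The survival probability `S(t) = ∫_{|x|_p ≤ 1} u(x,t) dx`. -/
def Sfun (χ : AddChar ℚ_[p] ℂ) (r : ℤ) (α t : ℝ) : ℂ :=
  ∫ x in {x : ℚ_[p] | ‖x‖ ≤ 1}, uball p χ r α t x ∂(μp p)

/-- The solution `u(x,t) = (Z_r(·,t) ∗ φ)(x)` of the Cauchy problem, with `u(x,0) = φ(x)`. -/
def sol (χ : AddChar ℚ_[p] ℂ) (r : ℤ) (α : ℝ) (φ : ℚ_[p] → ℂ) (t : ℝ) (x : ℚ_[p]) : ℂ :=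
  if t = 0 then φ x else ∫ y, heatKernel p χ r α t (x-y) * φ y ∂(μp p)

/-- The pseudodifferential operator `H^α` with symbol `⟨ξ⟩^α - p^{rα}`:
`H^α g = 𝓕⁻¹[(⟨ξ⟩^α - p^{rα}) 𝓕g]`. -/
def Hop (χ : AddChar ℚ_[p] ℂ) (r : ℤ) (α : ℝ) (g : ℚ_[p] → ℂ) (x : ℚ_[p]) : ℂ :=
  ∫ ξ, χ (-(x*ξ)) * (((max ‖ξ‖ ((p:ℝ)^r)) ^ α - (p:ℝ)^((r:ℝ)*α) : ℝ) : ℂ) *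
    (∫ y, χ (ξ*y) * g y ∂(μp p)) ∂(μp p)

/-- The Laplace transform `G_r(s)` of the density `g(t)`. -/
def Gr (χ : AddChar ℚ_[p] ℂ) (r : ℤ) (α : ℝ) (s : ℝ) : ℂ :=
  ∫ y in {y : ℚ_[p] | 1 < ‖y‖ ∧ ‖y‖ ≤ (p:ℝ)^(-r)}, (Kfun p r α y : ℂ) *
    ∫ ξ in {ξ : ℚ_[p] | ‖ξ‖ ≤ 1},
      χ (-(ξ*y)) / ((s:ℂ) + (((max ‖ξ‖ ((p:ℝ)^r)) ^ α - (p:ℝ)^((r:ℝ)*α) : ℝ) : ℂ)) ∂(μp p) ∂(μp p)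


instance : (μp p).IsAddHaarMeasure := by unfold μp; infer_instance

lemma padic_one_lt : (1:ℝ) < p := by exact_mod_cast (Fact.out : p.Prime).one_lt

lemma padic_norm_ge_of_gt {z : ℚ_[p]} {n : ℤ} (h : (p:ℝ)^n < ‖z‖) : (p:ℝ)^(n+1) ≤ ‖z‖ := by
  by_contra hlt
  push_neg at hlt
  exact not_le.2 h ((Padic.norm_le_pow_iff_norm_lt_pow_add_one z n).2 hlt)

lemma chi_norm_one (χ : AddChar ℚ_[p] ℂ) (hχ : ∀ y : ℚ_[p], χ y = 1 ↔ ‖y‖ ≤ 1) (y : ℚ_[p]) :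
    ‖χ y‖ = 1 := by
  obtain ⟨n, hn⟩ := pow_unbounded_of_one_lt ‖y‖ (padic_one_lt p)
  have h1 : χ ((p ^ n : ℕ) • y) = 1 := by
    apply (hχ _).2
    have he : ((p ^ n : ℕ) • y) = ((p : ℚ_[p]))^n * y := by
      push_cast [nsmul_eq_mul]
      ring
    have hpp : (0:ℝ) < (p:ℝ) := lt_trans zero_lt_one (padic_one_lt p)
    have hp0 : (0:ℝ) < (p:ℝ)^n := pow_pos hpp n
    rw [he, norm_mul, Padic.norm_p_pow, zpow_neg, zpow_natCast, inv_mul_eq_div,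
      div_le_one hp0]
    exact hn.le
  rw [AddChar.map_nsmul_eq_pow] at h1
  have h2 : ‖χ y‖ ^ (p ^ n) = 1 := by rw [← norm_pow, h1, norm_one]
  have hN : p ^ n ≠ 0 := pow_ne_zero _ (Fact.out : p.Prime).ne_zero
  rcases lt_trichotomy ‖χ y‖ 1 with h | h | h
  · have h3 := pow_lt_one₀ (norm_nonneg _) h hN
    rw [h2] at h3; exact absurd h3 (lt_irrefl _)
  · exact h
  · have h3 := one_lt_pow₀ h hN
    rw [h2] at h3; exact absurd h3 (lt_irrefl _)

lemma chi_ne_one (χ : AddChar ℚ_[p] ℂ) (hχ : ∀ y : ℚ_[p], χ y = 1 ↔ ‖y‖ ≤ 1) {y : ℚ_[p]}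
    (hy : 1 < ‖y‖) : χ y ≠ 1 := fun h => absurd ((hχ y).1 h) (not_le.2 hy)

lemma chi_continuous (χ : AddChar ℚ_[p] ℂ) (hχ : ∀ y : ℚ_[p], χ y = 1 ↔ ‖y‖ ≤ 1) :
    Continuous ⇑χ := by
  rw [continuous_iff_continuousAt]
  intro x
  apply Filter.EventuallyEq.continuousAt (y := χ x)
  filter_upwards [Metric.closedBall_mem_nhds x zero_lt_one] with y hy
  have hxy : χ y = χ x * χ (y - x) := by
    rw [← AddChar.map_add_eq_mul]; congr 1; ring
  rw [hxy, (hχ (y - x)).2 (by simpa [dist_eq_norm] using hy), mul_one]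

lemma integral_char_mul_eq_zero (χ : AddChar ℚ_[p] ℂ) (w η : ℚ_[p]) (g : ℚ_[p] → ℂ)
    (hg : ∀ ξ, g (ξ + η) = g ξ) (hne : χ (-(w*η)) ≠ 1) :
    ∫ ξ, χ (-(w*ξ)) * g ξ ∂(μp p) = 0 := by
  have h1 : ∫ ξ, χ (-(w*(ξ+η))) * g (ξ+η) ∂(μp p) = ∫ ξ, χ (-(w*ξ)) * g ξ ∂(μp p) :=
    integral_add_right_eq_self (fun ξ => χ (-(w*ξ)) * g ξ) η
  have h2 : ∀ ξ : ℚ_[p], χ (-(w*(ξ+η))) * g (ξ+η) = χ (-(w*η)) * (χ (-(w*ξ)) * g ξ) := by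
    intro ξ
    have he : -(w*(ξ+η)) = -(w*ξ) + -(w*η) := by ring
    rw [hg, he, AddChar.map_add_eq_mul]
    ring
  simp only [h2] at h1
  rw [integral_const_mul] at h1
  have h3 : (χ (-(w*η)) - 1) * (∫ ξ, χ (-(w*ξ)) * g ξ ∂(μp p)) = 0 := by
    rw [sub_mul, one_mul, h1, sub_self]
  rcases mul_eq_zero.1 h3 with h | h
  · exact absurd (sub_eq_zero.1 h) hne
  · exact h

lemma setIntegral_char_mul_eq_zero (χ : AddChar ℚ_[p] ℂ) {A : Set ℚ_[p]} (hA : MeasurableSet A)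
    (w η : ℚ_[p]) (g : ℚ_[p] → ℂ)
    (hg : ∀ ξ, A.indicator g (ξ + η) = A.indicator g ξ) (hne : χ (-(w*η)) ≠ 1) :
    ∫ ξ in A, χ (-(w*ξ)) * g ξ ∂(μp p) = 0 := by
  rw [← integral_indicator hA]
  have h : ∀ ξ, A.indicator (fun ξ => χ (-(w*ξ)) * g ξ) ξ = χ (-(w*ξ)) * A.indicator g ξ := by
    intro ξ
    by_cases hm : ξ ∈ A <;> simp [hm]
  simp only [h]
  exact integral_char_mul_eq_zero p χ w η _ hg hne

lemma max_norm_add {η : ℚ_[p]} {b : ℝ} (hη : ‖η‖ ≤ b) (ξ : ℚ_[p]) :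
    max ‖ξ + η‖ b = max ‖ξ‖ b := by
  rcases le_or_gt ‖ξ‖ b with h | h
  · rw [max_eq_right h, max_eq_right]
    exact le_trans (IsUltrametricDist.norm_add_le_max ξ η) (max_le h hη)
  · have hlt : ‖η‖ < ‖ξ‖ := lt_of_le_of_lt hη h
    have he : ‖ξ + η‖ = ‖ξ‖ := by
      rw [Padic.add_eq_max_of_ne hlt.ne', max_eq_left hlt.le]
    rw [he]

lemma zpow_rpow (m : ℤ) (α : ℝ) : ((p:ℝ)^m) ^ α = (p:ℝ) ^ ((m:ℝ)*α) := by
  have hp0 : (0:ℝ) ≤ p := le_of_lt (lt_trans zero_lt_one (padic_one_lt p))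
  rw [Real.rpow_mul hp0, Real.rpow_intCast]

lemma sfun_nonneg (r : ℤ) {α : ℝ} (hα : 0 < α) (ξ : ℚ_[p]) :
    0 ≤ (max ‖ξ‖ ((p:ℝ)^r)) ^ α - (p:ℝ) ^ ((r:ℝ)*α) := by
  rw [sub_nonneg, ← zpow_rpow p r α]
  have hp0 : (0:ℝ) ≤ (p:ℝ)^r :=
    le_of_lt (zpow_pos (lt_trans zero_lt_one (padic_one_lt p)) r)
  exact Real.rpow_le_rpow hp0 (le_max_right _ _) hα.le

lemma sfun_le (r : ℤ) {α : ℝ} (hα : 0 < α) {ξ : ℚ_[p]} (hξ : ‖ξ‖ ≤ (p:ℝ)^(r+1)) :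
    (max ‖ξ‖ ((p:ℝ)^r)) ^ α - (p:ℝ) ^ ((r:ℝ)*α)
      ≤ (p:ℝ)^(((r:ℝ)+1)*α) - (p:ℝ) ^ ((r:ℝ)*α) := by
  have h1 : max ‖ξ‖ ((p:ℝ)^r) ≤ (p:ℝ)^(r+1) :=
    max_le hξ (zpow_le_zpow_right₀ (padic_one_lt p).le (by omega))
  have h2 : ((p:ℝ)^(r+1)) ^ α = (p:ℝ)^(((r:ℝ)+1)*α) := by
    rw [zpow_rpow p (r+1) α]
    push_cast
    ring_nf
  have h3 : 0 ≤ max ‖ξ‖ ((p:ℝ)^r) := le_trans (norm_nonneg ξ) (le_max_left _ _)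
  have h4 := Real.rpow_le_rpow h3 h1 hα.le
  rw [h2] at h4
  linarith

lemma padic_pos : (0:ℝ) < p := lt_trans zero_lt_one (padic_one_lt p)

lemma heatKernel_eq_zero (χ : AddChar ℚ_[p] ℂ) (hχ : ∀ y : ℚ_[p], χ y = 1 ↔ ‖y‖ ≤ 1)
    (r : ℤ) (α t : ℝ) {w : ℚ_[p]} (hw : (p:ℝ)^(-r+1) ≤ ‖w‖) :
    heatKernel p χ r α t w = 0 := by
  have hp1 := padic_one_lt p
  have hppos := padic_pos p
  have hw0 : w ≠ 0 := by
    intro h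
    rw [h, norm_zero] at hw
    exact absurd hw (not_le.2 (zpow_pos hppos _))
  have hpz : (p:ℚ_[p]) ≠ 0 := Nat.cast_ne_zero.mpr (Fact.out : p.Prime).ne_zero
  set η := w⁻¹ * (p:ℚ_[p])⁻¹ with hηdef
  have hwη : w * η = (p:ℚ_[p])⁻¹ := by
    rw [hηdef]; field_simp
  have hpnorm : ‖((p:ℚ_[p]))⁻¹‖ = (p:ℝ) := by
    rw [norm_inv, Padic.norm_p, inv_inv]
  have hηnorm : ‖η‖ ≤ (p:ℝ)^r := by
    rw [hηdef, norm_mul, norm_inv, hpnorm]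
    have h0 : ((p:ℝ)^(-r+1))⁻¹ = (p:ℝ)^(r-1) := by
      rw [← zpow_neg]; congr 1; ring
    have h1 : ‖w‖⁻¹ ≤ (p:ℝ)^(r-1) := by
      have h2 := inv_anti₀ (zpow_pos hppos (-r+1)) hw
      rwa [h0] at h2
    calc ‖w‖⁻¹ * (p:ℝ) ≤ (p:ℝ)^(r-1) * (p:ℝ) :=
          mul_le_mul_of_nonneg_right h1 hppos.le
      _ = (p:ℝ)^r := by
          rw [← zpow_add_one₀ (ne_of_gt hppos)]
          congr 1
          ring
  have hne : χ (-(w*η)) ≠ 1 := by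
    apply chi_ne_one p χ hχ
    rw [norm_neg, hwη, hpnorm]
    exact hp1
  show (∫ ξ, χ (-(w*ξ)) *
    Complex.exp (-((t * ((max ‖ξ‖ ((p:ℝ)^r)) ^ α - (p:ℝ) ^ ((r:ℝ)*α)) : ℝ) : ℂ)) ∂(μp p)) = 0
  apply integral_char_mul_eq_zero p χ w η _ ?_ hne
  intro ξ
  simp only [max_norm_add p hηnorm ξ]

lemma eta_facts (r : ℤ) {w : ℚ_[p]} (hw : ‖w‖ = (p:ℝ)^(-r)) :
    ∃ η : ℚ_[p], ‖η‖ = (p:ℝ)^(r+1) ∧ ‖-(w*η)‖ = (p:ℝ) := by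
  have hppos := padic_pos p
  have hw0 : w ≠ 0 := by
    intro h
    rw [h, norm_zero] at hw
    exact absurd hw.symm (ne_of_gt (zpow_pos hppos _))
  have hpz : (p:ℚ_[p]) ≠ 0 := Nat.cast_ne_zero.mpr (Fact.out : p.Prime).ne_zero
  have hpnorm : ‖((p:ℚ_[p]))⁻¹‖ = (p:ℝ) := by
    rw [norm_inv, Padic.norm_p, inv_inv]
  refine ⟨w⁻¹ * (p:ℚ_[p])⁻¹, ?_, ?_⟩
  · rw [norm_mul, norm_inv, hw, ← zpow_neg, neg_neg, hpnorm, ← zpow_add_one₀ (ne_of_gt hppos)]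
  · rw [norm_neg, show w * (w⁻¹ * (p:ℚ_[p])⁻¹) = (p:ℚ_[p])⁻¹ from by field_simp, hpnorm]

lemma ball_char_integral_zero (χ : AddChar ℚ_[p] ℂ) (hχ : ∀ y : ℚ_[p], χ y = 1 ↔ ‖y‖ ≤ 1)
    (r : ℤ) {w : ℚ_[p]} (hw : ‖w‖ = (p:ℝ)^(-r)) :
    ∫ ξ in {ξ : ℚ_[p] | ‖ξ‖ ≤ (p:ℝ)^(r+1)}, χ (-(w*ξ)) ∂(μp p) = 0 := by
  obtain ⟨η, hη, hwη⟩ := eta_facts p r hw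
  have hA : MeasurableSet {ξ : ℚ_[p] | ‖ξ‖ ≤ (p:ℝ)^(r+1)} :=
    measurableSet_le measurable_norm measurable_const
  have hne : χ (-(w*η)) ≠ 1 := chi_ne_one p χ hχ (by rw [hwη]; exact padic_one_lt p)
  have hstab : ∀ ξ : ℚ_[p], ξ + η ∈ {ξ : ℚ_[p] | ‖ξ‖ ≤ (p:ℝ)^(r+1)} ↔
      ξ ∈ {ξ : ℚ_[p] | ‖ξ‖ ≤ (p:ℝ)^(r+1)} := by
    intro ξ
    simp only [Set.mem_setOf_eq]
    constructor
    · intro h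
      have he : ξ = (ξ + η) + (-η) := by ring
      rw [he]
      refine le_trans (IsUltrametricDist.norm_add_le_max _ _) (max_le h ?_)
      rw [norm_neg, hη]
    · intro h
      refine le_trans (IsUltrametricDist.norm_add_le_max _ _) (max_le h ?_)
      rw [hη]
  have h := setIntegral_char_mul_eq_zero p χ hA w η (fun _ => (1:ℂ)) ?_ hne
  · simpa using h
  · intro ξ
    by_cases hm : ξ ∈ {ξ : ℚ_[p] | ‖ξ‖ ≤ (p:ℝ)^(r+1)}
    · rw [Set.indicator_of_mem ((hstab ξ).2 hm), Set.indicator_of_mem hm]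
    · rw [Set.indicator_of_notMem (fun hc => hm ((hstab ξ).1 hc)),
        Set.indicator_of_notMem hm]

lemma tail_integral_zero (χ : AddChar ℚ_[p] ℂ) (hχ : ∀ y : ℚ_[p], χ y = 1 ↔ ‖y‖ ≤ 1)
    (r : ℤ) (α t : ℝ) {w : ℚ_[p]} (hw : ‖w‖ = (p:ℝ)^(-r)) :
    ∫ ξ in {ξ : ℚ_[p] | (p:ℝ)^(r+1) < ‖ξ‖}, χ (-(w*ξ)) *
      Complex.exp (-((t * ((max ‖ξ‖ ((p:ℝ)^r)) ^ α - (p:ℝ) ^ ((r:ℝ)*α)) : ℝ) : ℂ)) ∂(μp p)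
      = 0 := by
  obtain ⟨η, hη, hwη⟩ := eta_facts p r hw
  have hA : MeasurableSet {ξ : ℚ_[p] | (p:ℝ)^(r+1) < ‖ξ‖} :=
    measurableSet_lt measurable_const measurable_norm
  have hne : χ (-(w*η)) ≠ 1 := chi_ne_one p χ hχ (by rw [hwη]; exact padic_one_lt p)
  apply setIntegral_char_mul_eq_zero p χ hA w η _ ?_ hne
  intro ξ
  by_cases hm : ξ ∈ {ξ : ℚ_[p] | (p:ℝ)^(r+1) < ‖ξ‖}
  · have hlt : ‖η‖ < ‖ξ‖ := by rw [hη]; exact hm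
    have hnorm : ‖ξ + η‖ = ‖ξ‖ := by
      rw [Padic.add_eq_max_of_ne hlt.ne', max_eq_left hlt.le]
    have hmem : ξ + η ∈ {ξ : ℚ_[p] | (p:ℝ)^(r+1) < ‖ξ‖} := by
      simp only [Set.mem_setOf_eq, hnorm]; exact hm
    rw [Set.indicator_of_mem hmem, Set.indicator_of_mem hm]
    simp only [hnorm]
  · have hmem : ξ + η ∉ {ξ : ℚ_[p] | (p:ℝ)^(r+1) < ‖ξ‖} := by
      simp only [Set.mem_setOf_eq, not_lt] at hm ⊢
      exact le_trans (IsUltrametricDist.norm_add_le_max _ _) (max_le hm (le_of_eq hη))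
    rw [Set.indicator_of_notMem hmem, Set.indicator_of_notMem hm]

lemma sphere_bound (χ : AddChar ℚ_[p] ℂ) (hχ : ∀ y : ℚ_[p], χ y = 1 ↔ ‖y‖ ≤ 1)
    (r : ℤ) {α : ℝ} (hα : 0 < α) {t : ℝ} (ht : 0 ≤ t) {w : ℚ_[p]}
    (hw : ‖w‖ = (p:ℝ)^(-r)) :
    ‖heatKernel p χ r α t w‖ ≤ t * (((p:ℝ)^(((r:ℝ)+1)*α) - (p:ℝ)^((r:ℝ)*α)) *
      ((μp p) {ξ : ℚ_[p] | ‖ξ‖ ≤ (p:ℝ)^(r+1)}).toReal) := by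
  have hp1 := padic_one_lt p
  have hc0 : 0 ≤ (p:ℝ)^(((r:ℝ)+1)*α) - (p:ℝ)^((r:ℝ)*α) := by
    rw [sub_nonneg]
    exact Real.rpow_le_rpow_of_exponent_le hp1.le (by nlinarith)
  have hV0 : (0:ℝ) ≤ ((μp p) {ξ : ℚ_[p] | ‖ξ‖ ≤ (p:ℝ)^(r+1)}).toReal := ENNReal.toReal_nonneg
  have hA : MeasurableSet {ξ : ℚ_[p] | ‖ξ‖ ≤ (p:ℝ)^(r+1)} :=
    measurableSet_le measurable_norm measurable_const
  have hAcb : {ξ : ℚ_[p] | ‖ξ‖ ≤ (p:ℝ)^(r+1)} = Metric.closedBall 0 ((p:ℝ)^(r+1)) := by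
    ext ξ; simp [Metric.mem_closedBall, dist_eq_norm]
  have hAcomp : IsCompact {ξ : ℚ_[p] | ‖ξ‖ ≤ (p:ℝ)^(r+1)} := by
    rw [hAcb]; exact isCompact_closedBall _ _
  have hAfin := hAcomp.measure_lt_top (μ := μp p)
  have hKf : heatKernel p χ r α t w = ∫ ξ, χ (-(w*ξ)) *
      Complex.exp (-((t * ((max ‖ξ‖ ((p:ℝ)^r)) ^ α - (p:ℝ) ^ ((r:ℝ)*α)) : ℝ) : ℂ)) ∂(μp p) :=
    rfl
  by_cases hint : Integrable (fun ξ : ℚ_[p] => χ (-(w*ξ)) *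
      Complex.exp (-((t * ((max ‖ξ‖ ((p:ℝ)^r)) ^ α - (p:ℝ) ^ ((r:ℝ)*α)) : ℝ) : ℂ))) (μp p)
  · have hcompl : {ξ : ℚ_[p] | ‖ξ‖ ≤ (p:ℝ)^(r+1)}ᶜ = {ξ : ℚ_[p] | (p:ℝ)^(r+1) < ‖ξ‖} := by
      ext ξ; simp [not_le]
    have hsplit := (integral_add_compl hA hint).symm
    rw [hcompl] at hsplit
    rw [tail_integral_zero p χ hχ r α t hw, add_zero] at hsplit
    have hχcont : Continuous (fun ξ : ℚ_[p] => (χ (-(w*ξ)) : ℂ)) :=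
      (chi_continuous p χ hχ).comp ((continuous_const.mul continuous_id).neg)
    have hχint : IntegrableOn (fun ξ : ℚ_[p] => (χ (-(w*ξ)) : ℂ))
        {ξ : ℚ_[p] | ‖ξ‖ ≤ (p:ℝ)^(r+1)} (μp p) :=
      hχcont.continuousOn.integrableOn_compact hAcomp
    have hsub : ∫ ξ in {ξ : ℚ_[p] | ‖ξ‖ ≤ (p:ℝ)^(r+1)},
        ((χ (-(w*ξ)) * Complex.exp (-((t * ((max ‖ξ‖ ((p:ℝ)^r)) ^ α
          - (p:ℝ) ^ ((r:ℝ)*α)) : ℝ) : ℂ))) - χ (-(w*ξ))) ∂(μp p)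
        = ∫ ξ in {ξ : ℚ_[p] | ‖ξ‖ ≤ (p:ℝ)^(r+1)}, χ (-(w*ξ)) *
          Complex.exp (-((t * ((max ‖ξ‖ ((p:ℝ)^r)) ^ α - (p:ℝ) ^ ((r:ℝ)*α)) : ℝ) : ℂ)) ∂(μp p) := by
      rw [integral_sub hint.integrableOn hχint, ball_char_integral_zero p χ hχ r hw, sub_zero]
    have hbound : ‖∫ ξ in {ξ : ℚ_[p] | ‖ξ‖ ≤ (p:ℝ)^(r+1)},
        ((χ (-(w*ξ)) * Complex.exp (-((t * ((max ‖ξ‖ ((p:ℝ)^r)) ^ α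
          - (p:ℝ) ^ ((r:ℝ)*α)) : ℝ) : ℂ))) - χ (-(w*ξ))) ∂(μp p)‖
        ≤ (t * ((p:ℝ)^(((r:ℝ)+1)*α) - (p:ℝ)^((r:ℝ)*α))) *
          ((μp p) {ξ : ℚ_[p] | ‖ξ‖ ≤ (p:ℝ)^(r+1)}).toReal := by
      apply norm_setIntegral_le_of_norm_le_const_ae' hAfin
      apply ae_of_all
      intro ξ hξ
      simp only [Set.mem_setOf_eq] at hξ
      have hsle := sfun_le p r hα hξ
      have hs0 := sfun_nonneg p r hα ξ
      set s : ℝ := (max ‖ξ‖ ((p:ℝ)^r)) ^ α - (p:ℝ) ^ ((r:ℝ)*α) with hsdef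
      have hfac : χ (-(w*ξ)) * Complex.exp (-((t * s : ℝ) : ℂ)) - χ (-(w*ξ))
          = χ (-(w*ξ)) * (Complex.exp (-((t * s : ℝ) : ℂ)) - 1) := by ring
      rw [hfac, norm_mul, chi_norm_one p χ hχ, one_mul]
      have hexp : Complex.exp (-((t * s : ℝ) : ℂ)) - 1
          = ((Real.exp (-(t * s)) - 1 : ℝ) : ℂ) := by
        rw [← Complex.ofReal_neg, ← Complex.ofReal_exp, ← Complex.ofReal_one,
          ← Complex.ofReal_sub]
      rw [hexp, Complex.norm_real, Real.norm_eq_abs]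
      have hts0 : 0 ≤ t * s := mul_nonneg ht hs0
      have hexple : Real.exp (-(t * s)) ≤ 1 := Real.exp_le_one_iff.2 (by linarith)
      rw [abs_of_nonpos (by linarith)]
      have h1e := Real.add_one_le_exp (-(t * s))
      have h2 : t * s ≤ t * ((p:ℝ)^(((r:ℝ)+1)*α) - (p:ℝ)^((r:ℝ)*α)) :=
        mul_le_mul_of_nonneg_left hsle ht
      linarith
    rw [hKf, hsplit, ← hsub]
    exact le_trans hbound (le_of_eq (by ring))
  · rw [hKf, integral_undef hint, norm_zero]
    exact mul_nonneg ht (mul_nonneg hc0 hV0)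

theorem stmt13 (χ : AddChar ℚ_[p] ℂ) (hχ : ∀ y : ℚ_[p], χ y = 1 ↔ ‖y‖ ≤ 1) (r : ℤ) (α : ℝ) (hα : 0 < α)
    (ε : ℝ) (hε : (p:ℝ)^(-r-1) ≤ ε) :
    (∫ z in {z : ℚ_[p] | ε < ‖z‖},
        ‖z‖⁻¹ * ((max ‖(p:ℚ_[p]) * z⁻¹‖ ((p:ℝ)^r)) ^ α - (p:ℝ)^((r:ℝ)*α)) ∂(μp p)) = 0 ∧
    (∀ B : Set ℚ_[p], IsCompact B →
      Tendsto (fun t : ℝ => ⨆ x ∈ B,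
          (∫ y in {y : ℚ_[p] | ε < ‖y - x‖}, heatKernel p χ r α t (x-y) ∂(μp p)).re)
        (𝓝[>] (0:ℝ)) (𝓝 0)) := by
  have hp1 := padic_one_lt p
  have hppos := padic_pos p
  have hεpos : 0 < ε := lt_of_lt_of_le (zpow_pos hppos _) hε
  constructor
  · have hmeas : MeasurableSet {z : ℚ_[p] | ε < ‖z‖} :=
      measurableSet_lt measurable_const measurable_norm
    rw [setIntegral_congr_fun hmeas (g := fun _ => (0:ℝ)) ?_, integral_zero]
    intro z hz
    simp only [Set.mem_setOf_eq] at hz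
    show ‖z‖⁻¹ * ((max ‖(p:ℚ_[p]) * z⁻¹‖ ((p:ℝ)^r)) ^ α - (p:ℝ)^((r:ℝ)*α)) = 0
    have h1 : (p:ℝ)^(-r) ≤ ‖z‖ := by
      have h2 := padic_norm_ge_of_gt p (lt_of_le_of_lt hε hz)
      rwa [show -r-1+1 = -r by ring] at h2
    have h2 : ‖(p:ℚ_[p]) * z⁻¹‖ ≤ (p:ℝ)^r := by
      rw [norm_mul, Padic.norm_p, norm_inv]
      have hz1 : ‖z‖⁻¹ ≤ (p:ℝ)^r := by
        have h3 := inv_anti₀ (zpow_pos hppos (-r)) h1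
        rwa [← zpow_neg, neg_neg] at h3
      have hpinv : (p:ℝ)⁻¹ ≤ 1 := by
        rw [inv_le_one₀ hppos]; exact hp1.le
      calc (p:ℝ)⁻¹ * ‖z‖⁻¹ ≤ 1 * ((p:ℝ)^r) :=
            mul_le_mul hpinv hz1 (inv_nonneg.2 (norm_nonneg z)) zero_le_one
        _ = (p:ℝ)^r := one_mul _
    rw [max_eq_right h2, zpow_rpow p r α, sub_self, mul_zero]
  · intro B hB
    set c : ℝ := (p:ℝ)^(((r:ℝ)+1)*α) - (p:ℝ)^((r:ℝ)*α) with hcdef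
    set V : ℝ := ((μp p) {ξ : ℚ_[p] | ‖ξ‖ ≤ (p:ℝ)^(r+1)}).toReal with hVdef
    set W : ℝ := ((μp p) (Metric.closedBall (0:ℚ_[p]) ((p:ℝ)^(-r)))).toReal with hWdef
    have hc0 : 0 ≤ c := by
      rw [hcdef, sub_nonneg]
      exact Real.rpow_le_rpow_of_exponent_le hp1.le (by nlinarith)
    have hV0 : 0 ≤ V := ENNReal.toReal_nonneg
    have hW0 : 0 ≤ W := ENNReal.toReal_nonneg
    set M : ℝ := c * V * W with hMdef
    have hM0 : 0 ≤ M := mul_nonneg (mul_nonneg hc0 hV0) hW0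
    apply squeeze_zero_norm' (a := fun t : ℝ => M * t)
    · filter_upwards [self_mem_nhdsWithin] with t ht
      have ht0 : (0:ℝ) < t := ht
      have hMt0 : 0 ≤ M * t := mul_nonneg hM0 ht0.le
      have hGbound : ∀ x : ℚ_[p],
          |(∫ y in {y : ℚ_[p] | ε < ‖y - x‖}, heatKernel p χ r α t (x-y) ∂(μp p)).re| ≤ M * t := by
        intro x
        have hRmeas : MeasurableSet {y : ℚ_[p] | ε < ‖y - x‖} :=
          measurableSet_lt measurable_const
            ((continuous_id.sub continuous_const).norm.measurable)
        have hSBmeas : MeasurableSet (Metric.closedBall x ((p:ℝ)^(-r))) :=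
          measurableSet_closedBall
        have hSBfin := (isCompact_closedBall x ((p:ℝ)^(-r))).measure_lt_top (μ := μp p)
        have hK0 : 0 ≤ t * (c * V) := mul_nonneg ht0.le (mul_nonneg hc0 hV0)
        have hWx : ((μp p) (Metric.closedBall x ((p:ℝ)^(-r)))).toReal = W := by
          rw [hWdef]
          congr 1
          have he : Metric.closedBall x ((p:ℝ)^(-r))
              = (fun y => -x + y) ⁻¹' (Metric.closedBall 0 ((p:ℝ)^(-r))) := by
            ext y
            simp [Metric.mem_closedBall, dist_eq_norm, neg_add_eq_sub]
          rw [he, measure_preimage_add]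
        have hptw : ∀ y ∈ {y : ℚ_[p] | ε < ‖y - x‖}, ‖heatKernel p χ r α t (x-y)‖
            ≤ (Metric.closedBall x ((p:ℝ)^(-r))).indicator (fun _ => t * (c * V)) y := by
          intro y hy
          simp only [Set.mem_setOf_eq] at hy
          have hxy : (p:ℝ)^(-r) ≤ ‖x - y‖ := by
            rw [norm_sub_rev]
            have h4 := padic_norm_ge_of_gt p (lt_of_le_of_lt hε hy)
            rwa [show -r-1+1 = -r by ring] at h4
          rcases eq_or_lt_of_le hxy with heq | hlt
          · have hmem : y ∈ Metric.closedBall x ((p:ℝ)^(-r)) := by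
              rw [Metric.mem_closedBall, dist_eq_norm, norm_sub_rev]
              exact le_of_eq heq.symm
            rw [Set.indicator_of_mem hmem]
            have hsb := sphere_bound p χ hχ r hα ht0.le heq.symm
            rw [← hcdef, ← hVdef] at hsb
            exact hsb
          · have h5 : (p:ℝ)^(-r+1) ≤ ‖x - y‖ := padic_norm_ge_of_gt p hlt
            rw [heatKernel_eq_zero p χ hχ r α t h5, norm_zero]
            exact Set.indicator_nonneg (fun _ _ => hK0) y
        by_cases hi : IntegrableOn (fun y => heatKernel p χ r α t (x-y))
            {y : ℚ_[p] | ε < ‖y - x‖} (μp p)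
        · have hindint : Integrable
              ((Metric.closedBall x ((p:ℝ)^(-r))).indicator (fun _ => t * (c * V))) (μp p) := by
            rw [integrable_indicator_iff hSBmeas]
            exact integrableOn_const hSBfin.ne
          calc |(∫ y in {y : ℚ_[p] | ε < ‖y - x‖}, heatKernel p χ r α t (x-y) ∂(μp p)).re|
              ≤ ‖∫ y in {y : ℚ_[p] | ε < ‖y - x‖}, heatKernel p χ r α t (x-y) ∂(μp p)‖ := by
                exact Complex.abs_re_le_norm _
            _ ≤ ∫ y in {y : ℚ_[p] | ε < ‖y - x‖}, ‖heatKernel p χ r α t (x-y)‖ ∂(μp p) :=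
                norm_integral_le_integral_norm _
            _ ≤ ∫ y in {y : ℚ_[p] | ε < ‖y - x‖},
                  (Metric.closedBall x ((p:ℝ)^(-r))).indicator (fun _ => t * (c * V)) y ∂(μp p) :=
                setIntegral_mono_on hi.norm hindint.integrableOn hRmeas hptw
            _ ≤ ∫ y, (Metric.closedBall x ((p:ℝ)^(-r))).indicator
                  (fun _ => t * (c * V)) y ∂(μp p) :=
                setIntegral_le_integral hindint
                  (ae_of_all _ (Set.indicator_nonneg (fun _ _ => hK0)))
            _ = ((μp p) (Metric.closedBall x ((p:ℝ)^(-r)))).toReal • (t * (c * V)) :=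
                integral_indicator_const _ hSBmeas
            _ = M * t := by rw [hWx, smul_eq_mul, hMdef]; ring
        · rw [MeasureTheory.integral_undef hi]
          simpa using hMt0
      have hub : ∀ x : ℚ_[p],
          (⨆ _ : x ∈ B, (∫ y in {y : ℚ_[p] | ε < ‖y - x‖},
            heatKernel p χ r α t (x-y) ∂(μp p)).re) ≤ M * t := fun x =>
        Real.iSup_le (fun _ => (abs_le.1 (hGbound x)).2) hMt0
      have hBdd : BddAbove (Set.range fun x : ℚ_[p] => ⨆ _ : x ∈ B,
          (∫ y in {y : ℚ_[p] | ε < ‖y - x‖}, heatKernel p χ r α t (x-y) ∂(μp p)).re) := by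
        refine ⟨M * t, ?_⟩
        rintro v ⟨x, rfl⟩
        exact hub x
      have hupper : (⨆ x ∈ B, (∫ y in {y : ℚ_[p] | ε < ‖y - x‖},
          heatKernel p χ r α t (x-y) ∂(μp p)).re) ≤ M * t := Real.iSup_le hub hMt0
      have hlower : -(M * t) ≤ ⨆ x ∈ B, (∫ y in {y : ℚ_[p] | ε < ‖y - x‖},
          heatKernel p χ r α t (x-y) ∂(μp p)).re := by
        rcases B.eq_empty_or_nonempty with hBe | ⟨x₀, hx₀⟩
        · rw [hBe]
          simp only [Set.mem_empty_iff_false]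
          have hz : ∀ x : ℚ_[p], (⨆ _ : False, (∫ y in {y : ℚ_[p] | ε < ‖y - x‖},
              heatKernel p χ r α t (x-y) ∂(μp p)).re) = 0 := fun x =>
            Real.iSup_of_isEmpty _
          simp only [hz, ciSup_const]
          linarith
        · calc -(M * t) ≤ (∫ y in {y : ℚ_[p] | ε < ‖y - x₀‖},
              heatKernel p χ r α t (x₀-y) ∂(μp p)).re := (abs_le.1 (hGbound x₀)).1
            _ = ⨆ _ : x₀ ∈ B, (∫ y in {y : ℚ_[p] | ε < ‖y - x₀‖},
                heatKernel p χ r α t (x₀-y) ∂(μp p)).re :=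
              (ciSup_pos (f := fun _ : x₀ ∈ B => (∫ y in {y : ℚ_[p] | ε < ‖y - x₀‖},
                heatKernel p χ r α t (x₀-y) ∂(μp p)).re) hx₀).symm
            _ ≤ ⨆ x ∈ B, (∫ y in {y : ℚ_[p] | ε < ‖y - x‖},
                heatKernel p χ r α t (x-y) ∂(μp p)).re := le_ciSup hBdd x₀
      rw [Real.norm_eq_abs]
      exact abs_le.2 ⟨hlower, hupper⟩
    · have h : Tendsto (fun t : ℝ => M * t) (𝓝 0) (𝓝 0) := by
        have hcont : Continuous (fun t : ℝ => M * t) := continuous_const.mul continuous_id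
        have h2 := hcont.tendsto (0:ℝ)
        simpa using h2
      exact h.mono_left nhdsWithin_le_nhds

end
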